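/- Let ι be a finite index set and let s, a, b : ι → ℝ with sᵢ ≥ 0, aᵢ > 0 and bᵢ ≥ 0 for all i, and suppose sᵢ₀ > 0 for some i₀. Let τ₀ > 0, τ₁ > 0 and λ ∈ ℝ satisfy: (i) ∑ᵢ sᵢ·aᵢτ₁/(aᵢτ₀ + (1 + bᵢ)τ₁) = λ; (ii) ∑ᵢ sᵢ·( ln(1 + (aᵢτ₀ + bᵢτ₁)/τ₁) − aᵢτ₀/(aᵢτ₀ + (1 + bᵢ)τ₁) ) = λ; and (iii) λ·(τ₀ + τ₁ − 1) = 0. Then τ₀ + τ₁ = 1 and ∑ᵢ sᵢ·ln(1 + (aᵢτ₀ + bᵢτ₁)/τ₁) = ∑ᵢ sᵢ·aᵢ/(aᵢτ₀ + (1 + bᵢ)τ₁). -/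

import Mathlib

open Finset

/-- Case-1 derivation in the proof of Theorem 1: from the KKT stationarity
conditions and complementary slackness, τ₀ + τ₁ = 1 and the root equation holds. -/
theorem stmt_1 {ι : Type*} [Fintype ι] (s a b : ι → ℝ)
    (hs : ∀ i, 0 ≤ s i) (ha : ∀ i, 0 < a i) (hb : ∀ i, 0 ≤ b i)
    (hpos : ∃ i₀, 0 < s i₀)
    (τ₀ τ₁ lam : ℝ) (hτ₀ : 0 < τ₀) (hτ₁ : 0 < τ₁)
    (h1 : ∑ i, s i * (a i * τ₁ / (a i * τ₀ + (1 + b i) * τ₁)) = lam)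
    (h2 : ∑ i, s i * (Real.log (1 + (a i * τ₀ + b i * τ₁) / τ₁)
            - a i * τ₀ / (a i * τ₀ + (1 + b i) * τ₁)) = lam)
    (h3 : lam * (τ₀ + τ₁ - 1) = 0) :
    τ₀ + τ₁ = 1 ∧
    ∑ i, s i * Real.log (1 + (a i * τ₀ + b i * τ₁) / τ₁)
      = ∑ i, s i * (a i / (a i * τ₀ + (1 + b i) * τ₁)) := by
  have hD : ∀ i, 0 < a i * τ₀ + (1 + b i) * τ₁ := by
    intro i
    have := ha i; have := hb i
    positivity
  have hlam : 0 < lam := by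
    rw [← h1]
    obtain ⟨i₀, hi₀⟩ := hpos
    apply Finset.sum_pos'
    · intro i _
      have := hs i; have h := (ha i).le
      have := (hD i).le
      positivity
    · exact ⟨i₀, Finset.mem_univ i₀, by
        have := ha i₀; have := hD i₀
        positivity⟩
  have hsum : τ₀ + τ₁ = 1 := by
    rcases mul_eq_zero.mp h3 with h | h
    · exact absurd h hlam.ne'
    · linarith
  refine ⟨hsum, ?_⟩
  have key := h1.trans h2.symm
  simp only [mul_sub] at key
  rw [Finset.sum_sub_distrib] at key
  have : ∑ i, s i * Real.log (1 + (a i * τ₀ + b i * τ₁) / τ₁)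
      = ∑ i, s i * (a i * τ₁ / (a i * τ₀ + (1 + b i) * τ₁))
        + ∑ i, s i * (a i * τ₀ / (a i * τ₀ + (1 + b i) * τ₁)) := by linarith
  rw [this, ← Finset.sum_add_distrib]
  apply Finset.sum_congr rfl
  intro i _
  have hDi := (hD i).ne'
  have hτ : τ₀ + τ₁ = 1 := hsum
  field_simp
  linear_combination (s i * a i / (a i * τ₀ + (1 + b i) * τ₁)) * hτ
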